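/- (Invariance of the zero set of a particular integral.) Let H, f, a : ℝ^n × ℝ^n → ℝ be smooth functions with {f, H} = a·f (pointwise). Let γ : I → ℝ^n × ℝ^n be a smooth solution of Hamilton's equations for H on an open interval I such that the function t ↦ f(γ(t)) is real-analytic on I. If f(γ(t₀)) = 0 for some t₀ ∈ I, then f(γ(t)) = 0 for every t ∈ I. -/

import Mathlib

open scoped BigOperators

/-- The `i`-th coordinate direction in the `q` (position) factor of phase space `ℝⁿ × ℝⁿ`. -/
noncomputable def eQ (n : ℕ) (i : Fin n) : (Fin n → ℝ) × (Fin n → ℝ) :=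
  (Pi.single i 1, 0)

/-- The `i`-th coordinate direction in the `p` (momentum) factor of phase space `ℝⁿ × ℝⁿ`. -/
noncomputable def eP (n : ℕ) (i : Fin n) : (Fin n → ℝ) × (Fin n → ℝ) :=
  (0, Pi.single i 1)

/-- The canonical Poisson bracket `{f,g} = Σᵢ (∂f/∂qⁱ ∂g/∂pᵢ − ∂f/∂pᵢ ∂g/∂qⁱ)` on `ℝⁿ × ℝⁿ`. -/
noncomputable def poissonBracket {n : ℕ} (f g : (Fin n → ℝ) × (Fin n → ℝ) → ℝ)
    (x : (Fin n → ℝ) × (Fin n → ℝ)) : ℝ :=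
  ∑ i : Fin n, (fderiv ℝ f x (eQ n i) * fderiv ℝ g x (eP n i)
    - fderiv ℝ f x (eP n i) * fderiv ℝ g x (eQ n i))

/-- The Hamiltonian vector field `X_f = (∂f/∂p₁,…,∂f/∂pₙ, −∂f/∂q¹,…,−∂f/∂qⁿ)` on `ℝⁿ × ℝⁿ`. -/
noncomputable def hamVF {n : ℕ} (f : (Fin n → ℝ) × (Fin n → ℝ) → ℝ)
    (x : (Fin n → ℝ) × (Fin n → ℝ)) : (Fin n → ℝ) × (Fin n → ℝ) :=
  (fun i => fderiv ℝ f x (eP n i), fun i => - fderiv ℝ f x (eQ n i))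

/-- Decomposition of a phase-space vector along the coordinate directions. -/
lemma phase_decomp {n : ℕ} (u v : Fin n → ℝ) :
    ((u, v) : (Fin n → ℝ) × (Fin n → ℝ)) = ∑ i : Fin n, (u i • eQ n i + v i • eP n i) := by
  ext j <;> simp [eQ, eP, Prod.fst_sum, Prod.snd_sum, Finset.sum_apply, Pi.single_apply, mul_comm]

/-- The derivative of `f` in the direction of the Hamiltonian vector field of `H`
is the Poisson bracket `{f, H}`. -/
lemma fderiv_hamVF {n : ℕ} (f H : (Fin n → ℝ) × (Fin n → ℝ) → ℝ)
    (x : (Fin n → ℝ) × (Fin n → ℝ)) :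
    fderiv ℝ f x (hamVF H x) = poissonBracket f H x := by
  have : hamVF H x = ∑ i : Fin n,
      ((fderiv ℝ H x (eP n i)) • eQ n i + (-(fderiv ℝ H x (eQ n i))) • eP n i) := by
    rw [hamVF]; exact phase_decomp _ _
  rw [this, map_sum, poissonBracket]
  refine Finset.sum_congr rfl fun i _ => ?_
  rw [map_add, map_smul, map_smul]
  simp [smul_eq_mul]
  ring

/-- (Invariance of the zero set of a particular integral.) If `{f,H} = a·f`
pointwise, `γ` is a smooth solution of Hamilton's equations for `H` on an open interval on
which `t ↦ f (γ t)` is real-analytic, and `f (γ t₀) = 0` for some `t₀` in the interval, then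
`f (γ t) = 0` for every `t` in the interval. -/
theorem particular_integral_zero_set_invariant {n : ℕ}
    (H f a : (Fin n → ℝ) × (Fin n → ℝ) → ℝ)
    (hH : ContDiff ℝ (⊤ : ℕ∞) H) (hf : ContDiff ℝ (⊤ : ℕ∞) f) (ha : ContDiff ℝ (⊤ : ℕ∞) a)
    (hbracket : ∀ x, poissonBracket f H x = a x * f x)
    (t₁ t₂ : ℝ) (γ : ℝ → (Fin n → ℝ) × (Fin n → ℝ))
    (hγsmooth : ContDiffOn ℝ (⊤ : ℕ∞) γ (Set.Ioo t₁ t₂))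
    (hHam : ∀ t ∈ Set.Ioo t₁ t₂, HasDerivAt γ (hamVF H (γ t)) t)
    (hanal : AnalyticOnNhd ℝ (fun t => f (γ t)) (Set.Ioo t₁ t₂))
    (t₀ : ℝ) (ht₀ : t₀ ∈ Set.Ioo t₁ t₂) (hzero : f (γ t₀) = 0) :
    ∀ t ∈ Set.Ioo t₁ t₂, f (γ t) = 0 := by
  set g : ℝ → ℝ := fun t => f (γ t) with hg
  -- derivative of g
  have hderiv : ∀ t ∈ Set.Ioo t₁ t₂, HasDerivAt g (a (γ t) * g t) t := by
    intro t ht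
    have h1 : HasDerivAt g (fderiv ℝ f (γ t) (hamVF H (γ t))) t :=
      (hf.differentiable (by simp) (γ t)).hasFDerivAt.comp_hasDerivAt t (hHam t ht)
    rwa [fderiv_hamVF, hbracket] at h1
  -- pick T strictly between t₀ and t₂
  set T : ℝ := (t₀ + t₂) / 2 with hT
  have ht₀T : t₀ < T := by simp only [hT]; linarith [ht₀.2]
  have hTt₂ : T < t₂ := by simp only [hT]; linarith [ht₀.2]
  have hsub : Set.Icc t₀ T ⊆ Set.Ioo t₁ t₂ := fun s hs =>
    ⟨lt_of_lt_of_le ht₀.1 hs.1, lt_of_le_of_lt hs.2 hTt₂⟩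
  -- bound for a ∘ γ on the compact interval
  have hacont : ContinuousOn (fun t => a (γ t)) (Set.Icc t₀ T) :=
    (ha.continuous.comp_continuousOn
      ((hγsmooth.continuousOn).mono hsub))
  obtain ⟨K, hK⟩ := (isCompact_Icc).exists_bound_of_continuousOn hacont
  -- g is continuous on Icc t₀ T
  have hgcont : ContinuousOn g (Set.Icc t₀ T) := fun s hs =>
    ((hderiv s (hsub hs)).continuousAt).continuousWithinAt
  -- Gronwall: g = 0 on Icc t₀ T
  have hgz : ∀ s ∈ Set.Icc t₀ T, g s = 0 := by
    have := norm_le_gronwallBound_of_norm_deriv_right_le (f := g)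
      (f' := fun s => a (γ s) * g s) (δ := 0) (K := K) (ε := 0) (a := t₀) (b := T)
      hgcont
      (fun s hs => ((hderiv s (hsub (Set.Ico_subset_Icc_self hs))).hasDerivWithinAt))
      (by simp [hg, hzero])
      (fun s hs => by
        have h1 := hK s (Set.Ico_subset_Icc_self hs)
        have h2 : ‖a (γ s) * g s‖ = ‖a (γ s)‖ * ‖g s‖ := norm_mul _ _
        rw [h2, add_zero]
        exact mul_le_mul_of_nonneg_right h1 (norm_nonneg _))
    intro s hs
    have := this s hs
    rw [gronwallBound_ε0_δ0] at this
    exact norm_le_zero_iff.mp this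
  -- identity theorem: g vanishes frequently near t₀, hence everywhere on Ioo t₁ t₂
  have hfreq : ∃ᶠ s in nhdsWithin t₀ {t₀}ᶜ, g s = 0 := by
    have hev : ∀ᶠ s in nhdsWithin t₀ (Set.Ioi t₀), g s = 0 := by
      filter_upwards [Ioo_mem_nhdsGT_of_mem (Set.mem_Ico.mpr ⟨le_refl t₀, ht₀T⟩)] with s hs
      exact hgz s ⟨le_of_lt hs.1, le_of_lt hs.2⟩
    have hne : (nhdsWithin t₀ (Set.Ioi t₀)).NeBot := nhdsGT_neBot t₀
    exact (hev.frequently).filter_mono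
      (nhdsWithin_mono t₀ (fun s hs => Set.mem_compl_singleton_iff.mpr (ne_of_gt hs)))
  have := hanal.eqOn_zero_of_preconnected_of_frequently_eq_zero
    (isPreconnected_Ioo) ht₀ hfreq
  intro t ht
  exact this ht
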